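/- arXiv:2506.18058 — 2 statements merged into one kernel-verified Lean document; each statement's English description precedes it below -/
import Mathlib

section
/- Let γ = 1 or γ = 3/2, let D_φ, D_c, w, Δt > 0, let m_x, m_y ≥ 2, Δx, Δy > 0, set h = min(Δx, Δy) and s = 1/Δx² + 1/Δy², let M_N be the Neumann Kronecker-sum Laplacian of sizes (m_x, m_y) and steps (Δx, Δy), and let N be a real matrix of the same size with N·N = 0, ‖N‖₁ ≤ 4/h², and ‖N‖_∞ ≤ 4/h². Assume Δt·D_φ·s < γ + w·Δt and Δt·D_c·s < γ. If either h² > (1 + √41)·D_φ/w or Δt < γ·(√41 − 1)·h²/(40·D_φ + 2·w·h²), and furthermore Δt < γ·(√41 − 1)·h²/(40·D_c), then the spectral radii of the two iteration matrices Δt·D_φ·((γ + w·Δt)·I − Δt·D_φ·M_N)⁻¹·N and Δt·D_c·(γ·I − Δt·D_c·M_N)⁻¹·N are both strictly less than 1. -/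
open Matrix Kronecker

noncomputable def dirLap (m : ℕ) (Δ : ℝ) : Matrix (Fin m) (Fin m) ℝ :=
  Matrix.of fun i j =>
    if i = j then -2 / Δ ^ 2
    else if (i : ℕ) + 1 = (j : ℕ) ∨ (j : ℕ) + 1 = (i : ℕ) then 1 / Δ ^ 2
    else 0

noncomputable def neuLap (m : ℕ) (Δ : ℝ) : Matrix (Fin m) (Fin m) ℝ :=
  Matrix.of fun i j =>
    if i = j then -2 / Δ ^ 2
    else if ((i : ℕ) = 0 ∧ (j : ℕ) = 1) ∨ ((i : ℕ) = m - 1 ∧ (j : ℕ) = m - 2) then 2 / Δ ^ 2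
    else if (i : ℕ) + 1 = (j : ℕ) ∨ (j : ℕ) + 1 = (i : ℕ) then 1 / Δ ^ 2
    else 0

noncomputable def kronLapD (mx my : ℕ) (Δx Δy : ℝ) :
    Matrix (Fin my × Fin mx) (Fin my × Fin mx) ℝ :=
  (1 : Matrix (Fin my) (Fin my) ℝ) ⊗ₖ dirLap mx Δx +
    dirLap my Δy ⊗ₖ (1 : Matrix (Fin mx) (Fin mx) ℝ)

noncomputable def kronLapN (mx my : ℕ) (Δx Δy : ℝ) :
    Matrix (Fin my × Fin mx) (Fin my × Fin mx) ℝ :=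
  (1 : Matrix (Fin my) (Fin my) ℝ) ⊗ₖ neuLap mx Δx +
    neuLap my Δy ⊗ₖ (1 : Matrix (Fin mx) (Fin mx) ℝ)

noncomputable def specRad {n : Type*} [Fintype n] [DecidableEq n] (A : Matrix n n ℝ) : ℝ :=
  sSup ((fun z : ℂ => ‖z‖) '' spectrum ℂ (A.map Complex.ofReal))

noncomputable def specRadC {n : Type*} [Fintype n] [DecidableEq n] (A : Matrix n n ℂ) : ℝ :=
  sSup ((fun z : ℂ => ‖z‖) '' spectrum ℂ A)

noncomputable def norm1 {n : Type*} [Fintype n] (A : Matrix n n ℝ) : ℝ :=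
  ⨆ j, ∑ i, |A i j|

noncomputable def normInf {n : Type*} [Fintype n] (A : Matrix n n ℝ) : ℝ :=
  ⨆ i, ∑ j, |A i j|

noncomputable def norm2 {n : Type*} [Fintype n] [DecidableEq n] (A : Matrix n n ℝ) : ℝ :=
  ‖Matrix.toEuclideanCLM (𝕜 := ℝ) A‖

open scoped NNReal
section myhelpers
attribute [local instance]
  Matrix.linftyOpSeminormedAddCommGroup Matrix.linftyOpNormedAddCommGroup
  Matrix.linftyOpNormedSpace Matrix.linftyOpIsBoundedSMul
  Matrix.linftyOpNonUnitalSemiNormedRing Matrix.linftyOpSemiNormedRing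
  Matrix.linftyOpNonUnitalNormedRing Matrix.linftyOpNormedRing
  Matrix.linftyOpNormedAlgebra

section helpers
variable {m n : Type*} [Fintype m] [Fintype n] {α : Type*} [SeminormedAddCommGroup α]

lemma row_le_norm (A : Matrix m n α) (i : m) : ∑ j, ‖A i j‖ ≤ ‖A‖ := by
  rw [Matrix.linfty_opNorm_def]
  have h1 : (∑ j, ‖A i j‖₊ : ℝ≥0) ≤ (Finset.univ : Finset m).sup fun i => ∑ j, ‖A i j‖₊ :=
    Finset.le_sup (f := fun i => ∑ j, ‖A i j‖₊) (Finset.mem_univ i)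
  calc ∑ j, ‖A i j‖ = ((∑ j, ‖A i j‖₊ : ℝ≥0) : ℝ) := by push_cast; rfl
    _ ≤ _ := NNReal.coe_le_coe.mpr h1

lemma norm_le_of_row (A : Matrix m n α) {c : ℝ} (hc : 0 ≤ c)
    (hA : ∀ i, ∑ j, ‖A i j‖ ≤ c) : ‖A‖ ≤ c := by
  rw [Matrix.linfty_opNorm_def]
  have h1 : ((Finset.univ : Finset m).sup fun i => ∑ j, ‖A i j‖₊) ≤ ⟨c, hc⟩ := by
    refine Finset.sup_le fun i _ => ?_
    refine NNReal.coe_le_coe.mp ?_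
    calc ((∑ j, ‖A i j‖₊ : ℝ≥0) : ℝ) = ∑ j, ‖A i j‖ := by push_cast; rfl
      _ ≤ c := hA i
  exact_mod_cast NNReal.coe_le_coe.mpr h1

end helpers

lemma sum_ite_le {ι : Type*} [Fintype ι] (P : ι → Prop) [DecidablePred P] {c : ℝ} (hc : 0 ≤ c)
    (huniq : ∀ a b, P a → P b → a = b) : ∑ j, (if P j then c else 0) ≤ c := by
  classical
  rw [← Finset.sum_filter, Finset.sum_const, nsmul_eq_mul]
  have hcard : (Finset.univ.filter P).card ≤ 1 :=
    Finset.card_le_one.mpr fun a ha b hb =>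
      huniq a b (Finset.mem_filter.mp ha).2 (Finset.mem_filter.mp hb).2
  have : ((Finset.univ.filter P).card : ℝ) ≤ 1 := by exact_mod_cast hcard
  nlinarith

lemma one_row_sum {n : Type*} [Fintype n] [DecidableEq n] (i : n) :
    ∑ j, ‖(1 : Matrix n n ℝ) i j‖ = 1 := by
  simp [Matrix.one_apply, apply_ite norm]

lemma neu_row_sum {m : ℕ} (hm : 2 ≤ m) {Δ : ℝ} (hΔ : 0 < Δ) (i : Fin m) :
    ∑ j, ‖(neuLap m Δ + (2 / Δ ^ 2) • (1 : Matrix (Fin m) (Fin m) ℝ)) i j‖ ≤ 3 / Δ ^ 2 := by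
  have hΔ2 : (0:ℝ) < 1 / Δ ^ 2 := by positivity
  have h22 : (2:ℝ) / Δ ^ 2 = 1 / Δ ^ 2 + 1 / Δ ^ 2 := by ring
  have key : ∀ j, ‖(neuLap m Δ + (2 / Δ ^ 2) • (1 : Matrix (Fin m) (Fin m) ℝ)) i j‖ ≤
      (if (i : ℕ) + 1 = (j : ℕ) then 1 / Δ ^ 2 else 0) +
      ((if (j : ℕ) + 1 = (i : ℕ) then 1 / Δ ^ 2 else 0) +
      (if ((i : ℕ) = 0 ∧ (j : ℕ) = 1) ∨ ((i : ℕ) = m - 1 ∧ (j : ℕ) = m - 2) then 1 / Δ ^ 2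
        else 0)) := by
    intro j
    have hj := j.isLt
    have hi := i.isLt
    have p1 : (0:ℝ) ≤ if (i : ℕ) + 1 = (j : ℕ) then 1 / Δ ^ 2 else 0 := by
      split_ifs <;> positivity
    have p2 : (0:ℝ) ≤ if (j : ℕ) + 1 = (i : ℕ) then 1 / Δ ^ 2 else 0 := by
      split_ifs <;> positivity
    have p3 : (0:ℝ) ≤ if ((i : ℕ) = 0 ∧ (j : ℕ) = 1) ∨ ((i : ℕ) = m - 1 ∧ (j : ℕ) = m - 2)
        then 1 / Δ ^ 2 else 0 := by split_ifs <;> positivity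
    rw [Matrix.add_apply, Matrix.smul_apply, Matrix.one_apply, neuLap, Matrix.of_apply]
    rcases eq_or_ne i j with hij | hij
    · rw [if_pos hij, if_pos hij]
      have h0 : (-2 / Δ ^ 2 + (2 / Δ ^ 2) • (1:ℝ)) = 0 := by
        rw [smul_eq_mul, mul_one]; ring
      rw [h0, norm_zero]
      linarith
    · rw [if_neg hij, if_neg hij, smul_zero, add_zero]
      by_cases h2 : ((i : ℕ) = 0 ∧ (j : ℕ) = 1) ∨ ((i : ℕ) = m - 1 ∧ (j : ℕ) = m - 2)
      · rw [if_pos h2, Real.norm_eq_abs, abs_of_nonneg (by positivity : (0:ℝ) ≤ 2 / Δ ^ 2)]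
        have h3' : (if ((i : ℕ) = 0 ∧ (j : ℕ) = 1) ∨ ((i : ℕ) = m - 1 ∧ (j : ℕ) = m - 2)
            then 1 / Δ ^ 2 else 0) = 1 / Δ ^ 2 := if_pos h2
        rcases h2 with ⟨ha, hb⟩ | ⟨ha, hb⟩
        · have h1' : (if (i : ℕ) + 1 = (j : ℕ) then 1 / Δ ^ 2 else 0) = 1 / Δ ^ 2 :=
            if_pos (by omega)
          rw [h1', h3']; linarith
        · have h1' : (if (j : ℕ) + 1 = (i : ℕ) then 1 / Δ ^ 2 else 0) = 1 / Δ ^ 2 :=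
            if_pos (by omega)
          rw [h1', h3']; linarith
      · rw [if_neg h2]
        by_cases h3 : (i : ℕ) + 1 = (j : ℕ) ∨ (j : ℕ) + 1 = (i : ℕ)
        · rw [if_pos h3, Real.norm_eq_abs, abs_of_nonneg (by positivity : (0:ℝ) ≤ 1 / Δ ^ 2)]
          rcases h3 with h3 | h3
          · rw [if_pos h3]; linarith
          · have h2' : (if (j : ℕ) + 1 = (i : ℕ) then 1 / Δ ^ 2 else 0) = 1 / Δ ^ 2 := if_pos h3
            rw [h2']; linarith
        · rw [if_neg h3, norm_zero]; linarith
  calc ∑ j, ‖(neuLap m Δ + (2 / Δ ^ 2) • (1 : Matrix (Fin m) (Fin m) ℝ)) i j‖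
      ≤ ∑ j : Fin m, ((if (i : ℕ) + 1 = (j : ℕ) then 1 / Δ ^ 2 else 0) +
        ((if (j : ℕ) + 1 = (i : ℕ) then 1 / Δ ^ 2 else 0) +
        (if ((i : ℕ) = 0 ∧ (j : ℕ) = 1) ∨ ((i : ℕ) = m - 1 ∧ (j : ℕ) = m - 2) then 1 / Δ ^ 2
          else 0))) := Finset.sum_le_sum fun j _ => key j
    _ ≤ 1 / Δ ^ 2 + (1 / Δ ^ 2 + 1 / Δ ^ 2) := by
        rw [Finset.sum_add_distrib, Finset.sum_add_distrib]
        have hi := i.isLt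
        gcongr
        · exact sum_ite_le _ hΔ2.le fun a b ha hb => Fin.ext (by omega)
        · exact sum_ite_le _ hΔ2.le fun a b ha hb => Fin.ext (by omega)
        · refine sum_ite_le _ hΔ2.le fun a b ha hb => Fin.ext ?_
          have ha' := a.isLt; have hb' := b.isLt
          rcases ha with ⟨h1, h2⟩ | ⟨h1, h2⟩ <;> rcases hb with ⟨h3, h4⟩ | ⟨h3, h4⟩ <;> omega
    _ = 3 / Δ ^ 2 := by ring


lemma kron_decomp (mx my : ℕ) (Δx Δy : ℝ) :
    kronLapN mx my Δx Δy + (2 * (1 / Δx ^ 2 + 1 / Δy ^ 2)) •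
        (1 : Matrix (Fin my × Fin mx) (Fin my × Fin mx) ℝ) =
      (1 : Matrix (Fin my) (Fin my) ℝ) ⊗ₖ
          (neuLap mx Δx + (2 / Δx ^ 2) • (1 : Matrix (Fin mx) (Fin mx) ℝ)) +
        (neuLap my Δy + (2 / Δy ^ 2) • (1 : Matrix (Fin my) (Fin my) ℝ)) ⊗ₖ
          (1 : Matrix (Fin mx) (Fin mx) ℝ) := by
  rw [Matrix.kronecker_add, Matrix.add_kronecker, Matrix.kronecker_smul, Matrix.smul_kronecker,
    Matrix.one_kronecker_one, kronLapN,
    show (2 * (1 / Δx ^ 2 + 1 / Δy ^ 2) : ℝ) = 2 / Δx ^ 2 + 2 / Δy ^ 2 by ring, add_smul]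
  abel

lemma kron_row_sum {mx my : ℕ} (hmx : 2 ≤ mx) (hmy : 2 ≤ my) {Δx Δy : ℝ}
    (hΔx : 0 < Δx) (hΔy : 0 < Δy) (r : Fin my × Fin mx) :
    ∑ p, ‖(kronLapN mx my Δx Δy + (2 * (1 / Δx ^ 2 + 1 / Δy ^ 2)) •
        (1 : Matrix (Fin my × Fin mx) (Fin my × Fin mx) ℝ)) r p‖ ≤
      3 * (1 / Δx ^ 2 + 1 / Δy ^ 2) := by
  obtain ⟨iy, ix⟩ := r
  rw [kron_decomp]
  set Ax := neuLap mx Δx + (2 / Δx ^ 2) • (1 : Matrix (Fin mx) (Fin mx) ℝ) with hAx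
  set Ay := neuLap my Δy + (2 / Δy ^ 2) • (1 : Matrix (Fin my) (Fin my) ℝ) with hAy
  have S1 : ∑ p : Fin my × Fin mx,
      ‖((1 : Matrix (Fin my) (Fin my) ℝ) ⊗ₖ Ax) (iy, ix) p‖ ≤ 3 / Δx ^ 2 := by
    rw [Fintype.sum_prod_type]
    have : ∀ jy : Fin my, ∑ jx : Fin mx,
        ‖((1 : Matrix (Fin my) (Fin my) ℝ) ⊗ₖ Ax) (iy, ix) (jy, jx)‖ =
        ‖(1 : Matrix (Fin my) (Fin my) ℝ) iy jy‖ * ∑ jx, ‖Ax ix jx‖ := by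
      intro jy
      rw [Finset.mul_sum]
      refine Finset.sum_congr rfl fun jx _ => ?_
      rw [Matrix.kronecker_apply, norm_mul]
    rw [Finset.sum_congr rfl fun jy _ => this jy]
    calc ∑ jy : Fin my, ‖(1 : Matrix (Fin my) (Fin my) ℝ) iy jy‖ * ∑ jx, ‖Ax ix jx‖
        ≤ ∑ jy : Fin my, ‖(1 : Matrix (Fin my) (Fin my) ℝ) iy jy‖ * (3 / Δx ^ 2) := by
          refine Finset.sum_le_sum fun jy _ => ?_
          exact mul_le_mul_of_nonneg_left (neu_row_sum hmx hΔx ix) (norm_nonneg _)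
      _ = (∑ jy : Fin my, ‖(1 : Matrix (Fin my) (Fin my) ℝ) iy jy‖) * (3 / Δx ^ 2) := by
          rw [Finset.sum_mul]
      _ = 3 / Δx ^ 2 := by rw [one_row_sum iy, one_mul]
  have S2 : ∑ p : Fin my × Fin mx,
      ‖(Ay ⊗ₖ (1 : Matrix (Fin mx) (Fin mx) ℝ)) (iy, ix) p‖ ≤ 3 / Δy ^ 2 := by
    rw [Fintype.sum_prod_type]
    have : ∀ jy : Fin my, ∑ jx : Fin mx,
        ‖(Ay ⊗ₖ (1 : Matrix (Fin mx) (Fin mx) ℝ)) (iy, ix) (jy, jx)‖ =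
        ‖Ay iy jy‖ * ∑ jx, ‖(1 : Matrix (Fin mx) (Fin mx) ℝ) ix jx‖ := by
      intro jy
      rw [Finset.mul_sum]
      refine Finset.sum_congr rfl fun jx _ => ?_
      rw [Matrix.kronecker_apply, norm_mul]
    rw [Finset.sum_congr rfl fun jy _ => this jy]
    calc ∑ jy : Fin my, ‖Ay iy jy‖ * ∑ jx, ‖(1 : Matrix (Fin mx) (Fin mx) ℝ) ix jx‖
        = ∑ jy : Fin my, ‖Ay iy jy‖ * 1 := by
          refine Finset.sum_congr rfl fun jy _ => ?_; rw [one_row_sum ix]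
      _ = ∑ jy : Fin my, ‖Ay iy jy‖ := by simp
      _ ≤ 3 / Δy ^ 2 := neu_row_sum hmy hΔy iy
  calc ∑ p, ‖((1 : Matrix (Fin my) (Fin my) ℝ) ⊗ₖ Ax +
        Ay ⊗ₖ (1 : Matrix (Fin mx) (Fin mx) ℝ)) (iy, ix) p‖
      ≤ ∑ p : Fin my × Fin mx, (‖((1 : Matrix (Fin my) (Fin my) ℝ) ⊗ₖ Ax) (iy, ix) p‖ +
        ‖(Ay ⊗ₖ (1 : Matrix (Fin mx) (Fin mx) ℝ)) (iy, ix) p‖) := by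
        refine Finset.sum_le_sum fun p _ => ?_
        rw [Matrix.add_apply]; exact norm_add_le _ _
    _ = _ + _ := Finset.sum_add_distrib
    _ ≤ 3 / Δx ^ 2 + 3 / Δy ^ 2 := add_le_add S1 S2
    _ = 3 * (1 / Δx ^ 2 + 1 / Δy ^ 2) := by ring

lemma norm_one_matrix (n : Type*) [Fintype n] [DecidableEq n] [Nonempty n] :
    ‖(1 : Matrix n n ℝ)‖ = 1 := by
  refine le_antisymm (norm_le_of_row _ zero_le_one fun i => le_of_eq (one_row_sum i)) ?_
  have h := row_le_norm (1 : Matrix n n ℝ) (Classical.arbitrary n)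
  rwa [one_row_sum] at h

lemma inv_bound {n : Type*} [Fintype n] [DecidableEq n] [Nonempty n]
    (M : Matrix n n ℝ) (β c u : ℝ) (hβ : 0 < β) (hc : 0 ≤ c)
    (hu : ‖M + c • (1 : Matrix n n ℝ)‖ ≤ u) (hud : u < β + c) :
    ‖(β • (1 : Matrix n n ℝ) - M)⁻¹‖ ≤ (β + c - u)⁻¹ := by
  haveI : CompleteSpace (Matrix n n ℝ) :=
    (inferInstance : CompleteSpace (n → n → ℝ))
  have hu0 : 0 ≤ u := le_trans (norm_nonneg _) hu
  set d : ℝ := β + c with hd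
  have hd0 : 0 < d := by linarith
  set C : Matrix n n ℝ := d⁻¹ • (M + c • 1) with hC
  have hCn : ‖C‖ ≤ u / d := by
    rw [hC, norm_smul, Real.norm_eq_abs, abs_of_nonneg (inv_nonneg.mpr hd0.le),
      div_eq_inv_mul]
    exact mul_le_mul_of_nonneg_left hu (inv_nonneg.mpr hd0.le)
  have hC1 : ‖C‖ < 1 := lt_of_le_of_lt hCn (by rw [div_lt_one hd0]; linarith)
  have hmul : (1 - C) * (∑' k : ℕ, C ^ k) = 1 := mul_neg_geom_series C hC1
  have hEn : ‖∑' k : ℕ, C ^ k‖ ≤ (1 - ‖C‖)⁻¹ := by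
    have := tsum_geometric_le_of_norm_lt_one C hC1
    rwa [norm_one_matrix n, sub_self, zero_add] at this
  have hdC : d • C = M + c • 1 := by
    rw [hC, smul_smul, mul_inv_cancel₀ hd0.ne', one_smul]
  have hB : β • (1 : Matrix n n ℝ) - M = d • ((1 : Matrix n n ℝ) - C) := by
    rw [smul_sub, hdC, hd, add_smul]; abel
  have hBE : (β • (1 : Matrix n n ℝ) - M) * (d⁻¹ • ∑' k : ℕ, C ^ k) = 1 := by
    rw [hB, smul_mul_assoc, mul_smul_comm, smul_smul, mul_inv_cancel₀ hd0.ne', one_smul, hmul]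
  rw [Matrix.inv_eq_right_inv hBE, norm_smul, Real.norm_eq_abs,
    abs_of_nonneg (inv_nonneg.mpr hd0.le)]
  have h1 : (1 - ‖C‖)⁻¹ ≤ (1 - u / d)⁻¹ := by
    have h2 : 0 < 1 - u / d := by rw [sub_pos, div_lt_one hd0]; linarith
    exact inv_anti₀ h2 (by linarith [hCn])
  have h3 : 0 ≤ ‖∑' k : ℕ, C ^ k‖ := norm_nonneg _
  calc d⁻¹ * ‖∑' k : ℕ, C ^ k‖ ≤ d⁻¹ * (1 - u / d)⁻¹ := by
        refine mul_le_mul_of_nonneg_left (le_trans hEn h1) (inv_nonneg.mpr hd0.le)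
    _ = (β + c - u)⁻¹ := by
        rw [← mul_inv]
        congr 1
        field_simp
        rw [hd]

lemma sSup_spec_lt_one {n : Type*} [Fintype n] [DecidableEq n] [Nonempty n]
    (X : Matrix n n ℝ) (hX : ‖X‖ < 1) :
    sSup ((fun z : ℂ => ‖z‖) '' spectrum ℂ (X.map Complex.ofReal)) < 1 := by
  haveI : CompleteSpace (Matrix n n ℂ) :=
    (inferInstance : CompleteSpace (n → n → ℂ))
  have hmap : ‖X.map Complex.ofReal‖ ≤ ‖X‖ := by
    refine norm_le_of_row _ (norm_nonneg X) fun i => ?_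
    have : ∀ j, ‖(X.map Complex.ofReal) i j‖ = ‖X i j‖ := by
      intro j
      rw [Matrix.map_apply]; exact Complex.norm_real _
    rw [Finset.sum_congr rfl fun j _ => this j]
    exact row_le_norm X i
  refine lt_of_le_of_lt (Real.sSup_le ?_ (norm_nonneg _)) (lt_of_le_of_lt hmap hX)
  rintro x ⟨lam, hlam, rfl⟩
  exact spectrum.norm_le_norm_of_mem hlam

lemma main_part {mx my : ℕ} (hmx : 2 ≤ mx) (hmy : 2 ≤ my) {Δx Δy : ℝ}
    (hΔx : 0 < Δx) (hΔy : 0 < Δy)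
    (N : Matrix (Fin my × Fin mx) (Fin my × Fin mx) ℝ) (α β ν : ℝ)
    (hα : 0 < α) (hβ : 0 < β) (hν : 0 ≤ ν)
    (hN : ∀ i, ∑ j, ‖N i j‖ ≤ ν)
    (hβs : α * (1 / Δx ^ 2 + 1 / Δy ^ 2) < β)
    (hfin : α * ν < β - α * (1 / Δx ^ 2 + 1 / Δy ^ 2)) :
    specRad (α • ((β • 1 - α • kronLapN mx my Δx Δy)⁻¹ * N)) < 1 := by
  haveI : Nonempty (Fin my × Fin mx) := ⟨⟨⟨0, by omega⟩, ⟨0, by omega⟩⟩⟩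
  have hs0 : (0:ℝ) < 1 / Δx ^ 2 + 1 / Δy ^ 2 := by positivity
  have hNn : ‖N‖ ≤ ν := norm_le_of_row _ hν hN
  have hMnorm : ‖α • kronLapN mx my Δx Δy +
      (2 * α * (1 / Δx ^ 2 + 1 / Δy ^ 2)) • 1‖ ≤ 3 * α * (1 / Δx ^ 2 + 1 / Δy ^ 2) := by
    have h1 : α • kronLapN mx my Δx Δy + (2 * α * (1 / Δx ^ 2 + 1 / Δy ^ 2)) •
        (1 : Matrix (Fin my × Fin mx) (Fin my × Fin mx) ℝ) =
        α • (kronLapN mx my Δx Δy + (2 * (1 / Δx ^ 2 + 1 / Δy ^ 2)) • 1) := by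
      rw [smul_add, smul_smul, show α * (2 * (1 / Δx ^ 2 + 1 / Δy ^ 2)) =
        2 * α * (1 / Δx ^ 2 + 1 / Δy ^ 2) from by ring]
    rw [h1, norm_smul, Real.norm_eq_abs, abs_of_nonneg hα.le,
      show (3 : ℝ) * α * (1 / Δx ^ 2 + 1 / Δy ^ 2) = α * (3 * (1 / Δx ^ 2 + 1 / Δy ^ 2)) from
        by ring]
    refine mul_le_mul_of_nonneg_left ?_ hα.le
    exact norm_le_of_row _ (by positivity) fun r => kron_row_sum hmx hmy hΔx hΔy r
  have hinv : ‖(β • (1 : Matrix (Fin my × Fin mx) (Fin my × Fin mx) ℝ) -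
      α • kronLapN mx my Δx Δy)⁻¹‖ ≤
      (β + 2 * α * (1 / Δx ^ 2 + 1 / Δy ^ 2) - 3 * α * (1 / Δx ^ 2 + 1 / Δy ^ 2))⁻¹ := by
    refine inv_bound _ β (2 * α * (1 / Δx ^ 2 + 1 / Δy ^ 2))
      (3 * α * (1 / Δx ^ 2 + 1 / Δy ^ 2)) hβ (by positivity) hMnorm (by nlinarith)
  have hden : (0:ℝ) < β - α * (1 / Δx ^ 2 + 1 / Δy ^ 2) := by linarith
  have hXn : ‖α • ((β • (1 : Matrix (Fin my × Fin mx) (Fin my × Fin mx) ℝ) -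
      α • kronLapN mx my Δx Δy)⁻¹ * N)‖ < 1 := by
    rw [norm_smul, Real.norm_eq_abs, abs_of_nonneg hα.le]
    calc α * ‖(β • (1 : Matrix (Fin my × Fin mx) (Fin my × Fin mx) ℝ) -
          α • kronLapN mx my Δx Δy)⁻¹ * N‖
        ≤ α * ((β + 2 * α * (1 / Δx ^ 2 + 1 / Δy ^ 2) -
            3 * α * (1 / Δx ^ 2 + 1 / Δy ^ 2))⁻¹ * ν) := by
          refine mul_le_mul_of_nonneg_left ?_ hα.le
          refine le_trans (norm_mul_le _ _) ?_
          refine mul_le_mul hinv hNn (norm_nonneg _) ?_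
          rw [show β + 2 * α * (1 / Δx ^ 2 + 1 / Δy ^ 2) -
            3 * α * (1 / Δx ^ 2 + 1 / Δy ^ 2) = β - α * (1 / Δx ^ 2 + 1 / Δy ^ 2) from by ring]
          positivity
      _ = (α * ν) / (β - α * (1 / Δx ^ 2 + 1 / Δy ^ 2)) := by
          rw [show β + 2 * α * (1 / Δx ^ 2 + 1 / Δy ^ 2) -
            3 * α * (1 / Δx ^ 2 + 1 / Δy ^ 2) = β - α * (1 / Δx ^ 2 + 1 / Δy ^ 2) from by ring]
          ring
      _ < 1 := by rw [div_lt_one hden]; linarith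
  unfold specRad
  exact sSup_spec_lt_one _ hXn

end myhelpers

set_option maxHeartbeats 1000000 in
theorem stmt17 (γ : ℝ) (hγ : γ = 1 ∨ γ = 3 / 2)
    (Dφ Dc w Δt : ℝ) (hDφ : 0 < Dφ) (hDc : 0 < Dc) (hw : 0 < w) (hΔt : 0 < Δt)
    (mx my : ℕ) (hmx : 2 ≤ mx) (hmy : 2 ≤ my)
    (Δx Δy : ℝ) (hΔx : 0 < Δx) (hΔy : 0 < Δy)
    (h s : ℝ) (hh : h = min Δx Δy) (hs : s = 1 / Δx ^ 2 + 1 / Δy ^ 2)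
    (MN N : Matrix (Fin my × Fin mx) (Fin my × Fin mx) ℝ)
    (hMN : MN = kronLapN mx my Δx Δy)
    (hNnil : N * N = 0)
    (hN1 : norm1 N ≤ 4 / h ^ 2)
    (hNinf : normInf N ≤ 4 / h ^ 2)
    (hA1 : Δt * Dφ * s < γ + w * Δt)
    (hA2 : Δt * Dc * s < γ)
    (hcond1 : h ^ 2 > (1 + Real.sqrt 41) * Dφ / w ∨
      Δt < γ * (Real.sqrt 41 - 1) * h ^ 2 / (40 * Dφ + 2 * w * h ^ 2))
    (hcond2 : Δt < γ * (Real.sqrt 41 - 1) * h ^ 2 / (40 * Dc)) :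
    specRad ((Δt * Dφ) • (((γ + w * Δt) • 1 - (Δt * Dφ) • MN)⁻¹ * N)) < 1 ∧
      specRad ((Δt * Dc) • ((γ • 1 - (Δt * Dc) • MN)⁻¹ * N)) < 1 := by
  subst hMN hs
  have hh0 : 0 < h := by rw [hh]; exact lt_min hΔx hΔy
  have hh2 : (0:ℝ) < h ^ 2 := by positivity
  have hγ0 : 0 < γ := by rcases hγ with h' | h' <;> rw [h'] <;> norm_num
  have e41 : Real.sqrt 41 ^ 2 = 41 := Real.sq_sqrt (by norm_num)
  have hlt7 : Real.sqrt 41 < 7 := by nlinarith [Real.sqrt_nonneg 41]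
  have hgt6 : 6 < Real.sqrt 41 := by nlinarith [Real.sqrt_nonneg 41]
  have hxle : h ≤ Δx := by rw [hh]; exact min_le_left _ _
  have hyle : h ≤ Δy := by rw [hh]; exact min_le_right _ _
  have hs2 : 1 / Δx ^ 2 + 1 / Δy ^ 2 ≤ 2 / h ^ 2 := by
    have h1 : 1 / Δx ^ 2 ≤ 1 / h ^ 2 :=
      one_div_le_one_div_of_le hh2 (pow_le_pow_left₀ hh0.le hxle 2)
    have h2 : 1 / Δy ^ 2 ≤ 1 / h ^ 2 :=
      one_div_le_one_div_of_le hh2 (pow_le_pow_left₀ hh0.le hyle 2)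
    have h3 : (2:ℝ) / h ^ 2 = 1 / h ^ 2 + 1 / h ^ 2 := by ring
    linarith
  have hNrow : ∀ i, ∑ j, ‖N i j‖ ≤ 4 / h ^ 2 := by
    intro i
    have h1 : ∑ j, |N i j| ≤ ⨆ i, ∑ j, |N i j| :=
      le_ciSup (f := fun i => ∑ j, |N i j|) (Set.Finite.bddAbove (Set.finite_range _)) i
    simp only [Real.norm_eq_abs]
    exact le_trans h1 hNinf
  constructor
  · have hss : Δt * Dφ * (1 / Δx ^ 2 + 1 / Δy ^ 2) ≤ Δt * Dφ * (2 / h ^ 2) :=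
      mul_le_mul_of_nonneg_left hs2 (by positivity)
    have h6 : 6 * (Δt * Dφ) < (γ + w * Δt) * h ^ 2 := by
      rcases hcond1 with hcd | hcd
      · rw [gt_iff_lt, div_lt_iff₀ hw] at hcd
        nlinarith [mul_lt_mul_of_pos_left hcd hΔt, mul_pos hγ0 hh2, mul_pos hΔt hDφ]
      · rw [lt_div_iff₀ (by positivity : (0:ℝ) < 40 * Dφ + 2 * w * h ^ 2)] at hcd
        nlinarith [mul_pos hγ0 hh2, mul_pos hΔt hDφ,
          mul_nonneg (mul_nonneg hw.le hΔt.le) hh2.le]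
    have h7 : Δt * Dφ * (6 / h ^ 2) < γ + w * Δt := by
      rw [show Δt * Dφ * (6 / h ^ 2) = 6 * (Δt * Dφ) / h ^ 2 from by ring, div_lt_iff₀ hh2]
      linarith
    have hfin : Δt * Dφ * (4 / h ^ 2) <
        (γ + w * Δt) - Δt * Dφ * (1 / Δx ^ 2 + 1 / Δy ^ 2) := by
      have he : Δt * Dφ * (4 / h ^ 2) + Δt * Dφ * (2 / h ^ 2) = Δt * Dφ * (6 / h ^ 2) := by
        ring
      linarith
    exact main_part hmx hmy hΔx hΔy N (Δt * Dφ) (γ + w * Δt) (4 / h ^ 2)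
      (by positivity) (by nlinarith [mul_pos hw hΔt]) (by positivity) hNrow hA1 hfin
  · have hss : Δt * Dc * (1 / Δx ^ 2 + 1 / Δy ^ 2) ≤ Δt * Dc * (2 / h ^ 2) :=
      mul_le_mul_of_nonneg_left hs2 (by positivity)
    have h6 : 6 * (Δt * Dc) < γ * h ^ 2 := by
      rw [lt_div_iff₀ (by positivity : (0:ℝ) < 40 * Dc)] at hcond2
      nlinarith [mul_pos hγ0 hh2, mul_pos hΔt hDc]
    have h7 : Δt * Dc * (6 / h ^ 2) < γ := by
      rw [show Δt * Dc * (6 / h ^ 2) = 6 * (Δt * Dc) / h ^ 2 from by ring, div_lt_iff₀ hh2]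
      linarith
    have hfin : Δt * Dc * (4 / h ^ 2) < γ - Δt * Dc * (1 / Δx ^ 2 + 1 / Δy ^ 2) := by
      have he : Δt * Dc * (4 / h ^ 2) + Δt * Dc * (2 / h ^ 2) = Δt * Dc * (6 / h ^ 2) := by
        ring
      linarith
    exact main_part hmx hmy hΔx hΔy N (Δt * Dc) γ (4 / h ^ 2)
      (by positivity) hγ0 (by positivity) hNrow hA2 hfin
end

section
/- Let M_x be an m_x×m_x real matrix and M_y an m_y×m_y real matrix admitting factorizations M_x = Γ_x·Λ_x·Γ_x⁻¹ and M_y = Γ_y·Λ_y·Γ_y⁻¹ with Γ_x, Γ_y invertible and Λ_x, Λ_y diagonal. Let a, b ∈ ℝ be such that a + b·(Λ_x)_{ii} + b·(Λ_y)_{jj} ≠ 0 for all i, j, and let Y be an m_x×m_y real matrix. Define the m_x×m_y matrix Z entrywise by Z_{ij} = (Γ_x⁻¹·Y·(Γ_yᵀ)⁻¹)_{ij} / (a + b·(Λ_x)_{ii} + b·(Λ_y)_{jj}) and set X = Γ_x·Z·Γ_yᵀ. Then X satisfies the Sylvester equation (a·I + b·M_x)·X + b·X·M_yᵀ = Y,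 and X is the unique solution of this equation. -/
open Matrix Kronecker

theorem stmt19 {mx my : ℕ}
    (Mx Γx Λx : Matrix (Fin mx) (Fin mx) ℝ)
    (My Γy Λy : Matrix (Fin my) (Fin my) ℝ)
    (hΓx : IsUnit Γx) (hΛx : Λx.IsDiag) (hMx : Mx = Γx * Λx * Γx⁻¹)
    (hΓy : IsUnit Γy) (hΛy : Λy.IsDiag) (hMy : My = Γy * Λy * Γy⁻¹)
    (a b : ℝ) (hnz : ∀ i j, a + b * Λx i i + b * Λy j j ≠ 0)
    (Y Z X : Matrix (Fin mx) (Fin my) ℝ)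
    (hZ : Z = Matrix.of fun i j =>
      (Γx⁻¹ * Y * (Γyᵀ)⁻¹) i j / (a + b * Λx i i + b * Λy j j))
    (hX : X = Γx * Z * Γyᵀ) :
    (a • 1 + b • Mx) * X + b • (X * Myᵀ) = Y ∧
      ∀ X' : Matrix (Fin mx) (Fin my) ℝ,
        (a • 1 + b • Mx) * X' + b • (X' * Myᵀ) = Y → X' = X := by
  have hdx : IsUnit Γx.det := (Matrix.isUnit_iff_isUnit_det Γx).mp hΓx
  have hdy : IsUnit Γy.det := (Matrix.isUnit_iff_isUnit_det Γy).mp hΓy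
  have hxinv : Γx * Γx⁻¹ = 1 := Matrix.mul_nonsing_inv _ hdx
  have hxinv' : Γx⁻¹ * Γx = 1 := Matrix.nonsing_inv_mul _ hdx
  have hyinv : Γy * Γy⁻¹ = 1 := Matrix.mul_nonsing_inv _ hdy
  have hyinv' : Γy⁻¹ * Γy = 1 := Matrix.nonsing_inv_mul _ hdy
  have hyT : Γyᵀ * (Γy⁻¹)ᵀ = 1 := by rw [← Matrix.transpose_mul, hyinv', Matrix.transpose_one]
  have hyT' : (Γy⁻¹)ᵀ * Γyᵀ = 1 := by rw [← Matrix.transpose_mul, hyinv, Matrix.transpose_one]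
  have hinvT : (Γyᵀ)⁻¹ = (Γy⁻¹)ᵀ := (Matrix.transpose_nonsing_inv Γy).symm
  have c1 : ∀ Q : Matrix (Fin mx) (Fin my) ℝ, Γx⁻¹ * (Γx * Q) = Q := fun Q => by
    rw [← Matrix.mul_assoc, hxinv', Matrix.one_mul]
  have c2 : ∀ Q : Matrix (Fin mx) (Fin my) ℝ, Γx * (Γx⁻¹ * Q) = Q := fun Q => by
    rw [← Matrix.mul_assoc, hxinv, Matrix.one_mul]
  have c3 : ∀ R : Matrix (Fin my) (Fin my) ℝ, Γyᵀ * ((Γy⁻¹)ᵀ * R) = R := fun R => by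
    rw [← Matrix.mul_assoc, hyT, Matrix.one_mul]
  have hL : ∀ P : Matrix (Fin mx) (Fin my) ℝ, Λx * P = Matrix.of fun i j => Λx i i * P i j := by
    intro P; ext i j
    rw [Matrix.mul_apply, Finset.sum_eq_single i]
    · rfl
    · intro k _ hk; rw [hΛx fun h => hk h.symm, zero_mul]
    · intro h; exact absurd (Finset.mem_univ i) h
  have hR : ∀ P : Matrix (Fin mx) (Fin my) ℝ, P * Λyᵀ = Matrix.of fun i j => P i j * Λy j j := by
    intro P; ext i j
    rw [Matrix.mul_apply, Finset.sum_eq_single j]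
    · rfl
    · intro k _ hk; rw [Matrix.transpose_apply, hΛy fun h => hk h.symm, mul_zero]
    · intro h; exact absurd (Finset.mem_univ j) h
  have key : ∀ P : Matrix (Fin mx) (Fin my) ℝ,
      (a • 1 + b • Λx) * P + b • (P * Λyᵀ) =
        Matrix.of fun i j => (a + b * Λx i i + b * Λy j j) * P i j := by
    intro P
    ext i j
    simp only [Matrix.add_apply, Matrix.add_mul, Matrix.smul_mul, Matrix.smul_apply,
      Matrix.one_mul, hL, hR, Matrix.of_apply, smul_eq_mul]
    ring
  have e1 : ∀ P : Matrix (Fin mx) (Fin my) ℝ,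
      Mx * (Γx * P * Γyᵀ) = Γx * (Λx * P) * Γyᵀ := by
    intro P
    rw [hMx]
    simp only [Matrix.mul_assoc]
    rw [c1]
  have e2 : ∀ P : Matrix (Fin mx) (Fin my) ℝ,
      (Γx * P * Γyᵀ) * Myᵀ = Γx * (P * Λyᵀ) * Γyᵀ := by
    intro P
    rw [hMy]
    have h : (Γy * Λy * Γy⁻¹)ᵀ = (Γy⁻¹)ᵀ * Λyᵀ * Γyᵀ := by
      rw [Matrix.transpose_mul, Matrix.transpose_mul, Matrix.mul_assoc]
    rw [h]
    simp only [Matrix.mul_assoc]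
    rw [c3]
  have conj : ∀ P : Matrix (Fin mx) (Fin my) ℝ,
      (a • 1 + b • Mx) * (Γx * P * Γyᵀ) + b • (Γx * P * Γyᵀ * Myᵀ)
        = Γx * ((a • 1 + b • Λx) * P + b • (P * Λyᵀ)) * Γyᵀ := by
    intro P
    rw [Matrix.add_mul, Matrix.smul_mul, Matrix.smul_mul, Matrix.one_mul, e1, e2]
    simp only [Matrix.add_mul, Matrix.mul_add, Matrix.smul_mul, Matrix.mul_smul,
      Matrix.one_mul, Matrix.mul_assoc]
  set W : Matrix (Fin mx) (Fin my) ℝ := Γx⁻¹ * Y * (Γyᵀ)⁻¹ with hW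
  have hDZ : (Matrix.of fun i j => (a + b * Λx i i + b * Λy j j) * Z i j) = W := by
    ext i j
    rw [hZ]
    simp only [Matrix.of_apply]
    rw [mul_div_cancel₀ _ (hnz i j)]
  have hWY : Γx * W * Γyᵀ = Y := by
    rw [hW, hinvT]
    simp only [Matrix.mul_assoc]
    rw [hyT', Matrix.mul_one, c2]
  constructor
  · rw [hX, conj Z, key Z, hDZ, hWY]
  · intro X' hX'
    set P : Matrix (Fin mx) (Fin my) ℝ := Γx⁻¹ * X' * (Γyᵀ)⁻¹ with hP
    have hPX : Γx * P * Γyᵀ = X' := by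
      rw [hP, hinvT]
      simp only [Matrix.mul_assoc]
      rw [hyT', Matrix.mul_one, c2]
    rw [← hPX, conj P, key P] at hX'
    have hDP : (Matrix.of fun i j => (a + b * Λx i i + b * Λy j j) * P i j) = W := by
      rw [hW, ← hX', hinvT]
      simp only [Matrix.mul_assoc]
      rw [hyT, Matrix.mul_one, c1]
    have hPZ : P = Z := by
      ext i j
      have h := congrFun (congrFun hDP i) j
      simp only [Matrix.of_apply] at h
      rw [hZ]
      simp only [Matrix.of_apply]
      rw [eq_div_iff (hnz i j), mul_comm, h]
    rw [← hPX, hPZ, hX]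
end
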